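/- arXiv:1011.5670 — 4 statements merged into one kernel-verified Lean document; each statement's English description precedes it below -/
import Mathlib

section
/- Let U ⊆ ℝ² be open, let φ : U × ℝ² → ℝ be continuous with φ(x,·) a norm on ℝ² for each x ∈ U, let h : U → ℝ be differentiable with Dh(x)(v) ≤ φ(x,v) for all x ∈ U and v ∈ ℝ², and let γ : [a,b] → U be a curve with h(γ(t)) = t for all t ∈ [a,b]. Then every piecewise C¹ curve γ₁ : [c,d] → U with γ₁(c) = γ(a) and γ₁(d) = γ(b) satisfies ∫_c^d φ(γ₁(t), γ₁'(t)) dt ≥ b − a. In particular γ is a shortest path in U from γ(a) to γ(b) for the length functional c ↦ ∫ φ(c(t), c'(t)) dt. -/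
open Set MeasureTheory

noncomputable section

/-- `ℝ²` with the Euclidean norm. -/
abbrev E2 : Type := EuclideanSpace ℝ (Fin 2)

/-- A map is piecewise `C¹` on `[α, β]` if there is a partition of `[α, β]` into finitely
many subintervals on each of which it is `C¹`. -/
def PiecewiseC1On (c : ℝ → E2) (α β : ℝ) : Prop :=
  ∃ (n : ℕ) (τ : Fin (n + 1) → ℝ), Monotone τ ∧ τ 0 = α ∧ τ (Fin.last n) = β ∧
    ∀ i : Fin n, ContDiffOn ℝ 1 c (Icc (τ i.castSucc) (τ i.succ))

/-- **Calibrator lemma.** Let `φ(x,·)` be a continuously varying family of norms on an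
open set `U ⊆ ℝ²`, `h : U → ℝ` a differentiable calibrator (`Dh(x)(v) ≤ φ(x,v)`), and
`γ : [a,b] → U` a curve with `h(γ(t)) = t`. Then every piecewise `C¹` curve in `U` from
`γ(a)` to `γ(b)` has `φ`-length at least `b − a`; in particular `γ` is a shortest path in
`U` between its endpoints. -/
theorem calibrator_implies_minimizing
    (U : Set E2) (hU : IsOpen U)
    (φ : E2 → E2 → ℝ)
    (hφcont : ContinuousOn (fun p : E2 × E2 => φ p.1 p.2) (U ×ˢ univ))
    (hφnonneg : ∀ x ∈ U, ∀ v, 0 ≤ φ x v)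
    (hφzero : ∀ x ∈ U, ∀ v, φ x v = 0 ↔ v = 0)
    (hφsmul : ∀ x ∈ U, ∀ (c : ℝ) (v : E2), φ x (c • v) = |c| * φ x v)
    (hφadd : ∀ x ∈ U, ∀ v w, φ x (v + w) ≤ φ x v + φ x w)
    (h : E2 → ℝ) (hdiff : ∀ x ∈ U, DifferentiableAt ℝ h x)
    (hcalib : ∀ x ∈ U, ∀ v : E2, fderiv ℝ h x v ≤ φ x v)
    (a b : ℝ) (γ : ℝ → E2) (hγU : ∀ t ∈ Icc a b, γ t ∈ U)
    (hγh : ∀ t ∈ Icc a b, h (γ t) = t) :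
    ∀ (γ₁ : ℝ → E2) (c d : ℝ), PiecewiseC1On γ₁ c d →
      (∀ t ∈ Icc c d, γ₁ t ∈ U) → γ₁ c = γ a → γ₁ d = γ b →
      b - a ≤ ∫ t in c..d, φ (γ₁ t) (deriv γ₁ t) := by
  intro γ₁ c d hpw hγ₁U hc hd
  obtain ⟨n, τ, hmono, hτ0, hτn, hC1⟩ := hpw
  have hcd : c ≤ d := by
    rw [← hτ0, ← hτn]; exact hmono (Fin.le_last _)
  set f : ℝ → ℝ := fun t => φ (γ₁ t) (deriv γ₁ t) with hf
  rcases le_total b a with hba | hab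
  · -- trivial case: the integral is nonnegative
    have h0 : (0:ℝ) ≤ ∫ t in c..d, f t := by
      rw [intervalIntegral.integral_of_le hcd]
      refine setIntegral_nonneg measurableSet_Ioc fun t ht => ?_
      exact hφnonneg _ (hγ₁U t (Ioc_subset_Icc_self ht)) _
    linarith
  · -- main case
    have hsub : ∀ i : Fin n, Icc (τ i.castSucc) (τ i.succ) ⊆ Icc c d := by
      intro i t ht
      refine ⟨le_trans ?_ ht.1, le_trans ht.2 ?_⟩
      · rw [← hτ0]; exact hmono (Fin.zero_le _)
      · rw [← hτn]; exact hmono (Fin.le_last _)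
    -- key estimate on each piece
    have key : ∀ i : Fin n,
        (h (γ₁ (τ i.succ)) - h (γ₁ (τ i.castSucc)) ≤ ∫ t in τ i.castSucc..τ i.succ, f t) ∧
        IntervalIntegrable f volume (τ i.castSucc) (τ i.succ) := by
      intro i
      set α := τ i.castSucc with hα
      set β := τ i.succ with hβ
      have hαβ : α ≤ β := hmono (Fin.castSucc_le_succ i)
      rcases eq_or_lt_of_le hαβ with heq | hlt
      · rw [← heq]
        simp [intervalIntegral.integral_same, IntervalIntegrable]
      have hmem : ∀ t ∈ Icc α β, γ₁ t ∈ U := fun t ht => hγ₁U t (hsub i ht)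
      have hcontγ : ContinuousOn γ₁ (Icc α β) := (hC1 i).continuousOn
      -- integrability of f on the piece
      have hFcont : ContinuousOn (fun t => φ (γ₁ t) (derivWithin γ₁ (Icc α β) t)) (Icc α β) := by
        have hdw : ContinuousOn (derivWithin γ₁ (Icc α β)) (Icc α β) := by
          have := (hC1 i).derivWithin (uniqueDiffOn_Icc hlt) (m := 0) le_rfl
          exact this.continuousOn
        have hpair : ContinuousOn (fun t => (γ₁ t, derivWithin γ₁ (Icc α β) t)) (Icc α β) :=
          hcontγ.prodMk hdw
        exact hφcont.comp hpair fun t ht => ⟨hmem t ht, mem_univ _⟩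
      have hFint : IntegrableOn (fun t => φ (γ₁ t) (derivWithin γ₁ (Icc α β) t)) (Icc α β) :=
        hFcont.integrableOn_Icc
      have heqIoo : ∀ t ∈ Ioo α β, f t = φ (γ₁ t) (derivWithin γ₁ (Icc α β) t) := by
        intro t ht
        rw [derivWithin_of_mem_nhds (Icc_mem_nhds ht.1 ht.2)]
      have hfint : IntegrableOn f (Icc α β) := by
        rw [integrableOn_Icc_iff_integrableOn_Ioo]
        rw [integrableOn_Icc_iff_integrableOn_Ioo] at hFint
        exact hFint.congr_fun (fun t ht => (heqIoo t ht).symm) measurableSet_Ioo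
      -- continuity of h ∘ γ₁
      have hgcont : ContinuousOn (fun t => h (γ₁ t)) (Icc α β) := fun t ht =>
        ((hdiff _ (hmem t ht)).continuousAt).comp_continuousWithinAt (hcontγ t ht)
      -- derivative of h ∘ γ₁ on the interior
      have hderiv : ∀ t ∈ Ioo α β,
          HasDerivWithinAt (fun t => h (γ₁ t)) (fderiv ℝ h (γ₁ t) (deriv γ₁ t)) (Ioi t) t := by
        intro t ht
        have hdγ : DifferentiableAt ℝ γ₁ t :=
          (((hC1 i).differentiableOn one_ne_zero) t (Ioo_subset_Icc_self ht)).differentiableAt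
            (Icc_mem_nhds ht.1 ht.2)
        have : HasDerivAt (fun t => h (γ₁ t)) (fderiv ℝ h (γ₁ t) (deriv γ₁ t)) t :=
          ((hdiff _ (hmem t (Ioo_subset_Icc_self ht))).hasFDerivAt).comp_hasDerivAt t
            hdγ.hasDerivAt
        exact this.hasDerivWithinAt
      refine ⟨intervalIntegral.sub_le_integral_of_hasDeriv_right_of_le hαβ hgcont hderiv hfint
        fun t ht => ?_, (intervalIntegrable_iff_integrableOn_Icc_of_le hαβ).2 hfint⟩
      exact hcalib _ (hmem t (Ioo_subset_Icc_self ht)) _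
    -- ℕ-indexed partition points
    set σ : ℕ → ℝ := fun k => τ ⟨min k n, Nat.lt_succ_of_le (min_le_right _ _)⟩ with hσ
    have hσk : ∀ k (hk : k < n),
        σ k = τ (⟨k, hk⟩ : Fin n).castSucc ∧ σ (k + 1) = τ (⟨k, hk⟩ : Fin n).succ := by
      intro k hk
      constructor <;> simp [hσ, Fin.ext_iff, Nat.min_eq_left, hk.le, Nat.succ_le_of_lt hk]
    have hσ0 : σ 0 = c := by simp [hσ, Fin.ext_iff, ← hτ0]
    have hσn : σ n = d := by
      rw [← hτn]; simp [hσ, Fin.ext_iff, Fin.last]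
    have hint : ∀ k < n, IntervalIntegrable f volume (σ k) (σ (k + 1)) := by
      intro k hk
      rw [(hσk k hk).1, (hσk k hk).2]
      exact (key ⟨k, hk⟩).2
    have hsum : ∑ k ∈ Finset.range n, ∫ t in σ k..σ (k + 1), f t = ∫ t in c..d, f t := by
      rw [intervalIntegral.sum_integral_adjacent_intervals hint, hσ0, hσn]
    have htel : ∑ k ∈ Finset.range n, (h (γ₁ (σ (k + 1))) - h (γ₁ (σ k))) = b - a := by
      rw [Finset.sum_range_sub (fun k => h (γ₁ (σ k))), hσ0, hσn, hc, hd,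
        hγh a ⟨le_rfl, hab⟩, hγh b ⟨hab, le_rfl⟩]
    calc b - a = ∑ k ∈ Finset.range n, (h (γ₁ (σ (k + 1))) - h (γ₁ (σ k))) := htel.symm
      _ ≤ ∑ k ∈ Finset.range n, ∫ t in σ k..σ (k + 1), f t := by
          refine Finset.sum_le_sum fun k hk => ?_
          have hkn := Finset.mem_range.1 hk
          rw [(hσk k hkn).1, (hσk k hkn).2]
          exact (key ⟨k, hkn⟩).1
      _ = ∫ t in c..d, f t := hsum

end
end

section
/- Let V be a finite-dimensional real vector space with a Minkowski norm Φ, let U ⊆ ℝ² be open, S : U → V a C^∞ immersion, I an open interval, and γ : I → U a C^∞ curve such that the curve γ_S = S∘γ satisfies Φ(γ_S'(t)) = 1 for all t. Let W ⊆ U be open, h : W → ℝ a C^∞ function with values in I such that h(γ(t)) = t whenever γ(t) ∈ W, and such that for every x ∈ W one has L_Φ(γ_S'(h(x)))(S(x) − γ_S(h(x))) = 0. Then for every t₀ ∈ I with x₀ := γ(t₀) ∈ W, the derivative of h at x₀ equals the composition of L_Φ(γ_S'(t₀)) with DS(x₀), i.e. Dh(x₀)(v) = L_Φ(γ_S'(t₀))(DS(x₀)·v)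 for all v ∈ ℝ²; consequently sup{ Dh(x₀)(v) : v ∈ ℝ², Φ(DS(x₀)·v) = 1 } = 1. -/
open Set

noncomputable section

/-- A Minkowski norm on a real vector space: a norm whose square is `C^∞` away from the
origin with positive definite second derivative at every nonzero point. -/
structure IsMinkowskiNorm {V : Type*} [NormedAddCommGroup V] [NormedSpace ℝ V]
    (Φ : V → ℝ) : Prop where
  nonneg : ∀ v, 0 ≤ Φ v
  eq_zero_iff : ∀ v, Φ v = 0 ↔ v = 0
  smul : ∀ (c : ℝ) (v : V), Φ (c • v) = |c| * Φ v
  add_le : ∀ v w, Φ (v + w) ≤ Φ v + Φ w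
  smooth : ContDiffOn ℝ (⊤ : ℕ∞) (fun v => (Φ v) ^ 2) {(0 : V)}ᶜ
  posdef : ∀ v : V, v ≠ 0 → ∀ w : V, w ≠ 0 →
    0 < iteratedFDeriv ℝ 2 (fun v => (Φ v) ^ 2) v ![w, w]

/-- The Legendre transform of a norm `Φ`: `L_Φ(v) = ½ D(Φ²)(v)`. -/
def legendre {V : Type*} [NormedAddCommGroup V] [NormedSpace ℝ V]
    (Φ : V → ℝ) (v : V) : V →L[ℝ] ℝ :=
  (1 / 2 : ℝ) • fderiv ℝ (fun w => (Φ w) ^ 2) v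

section aux

variable {V : Type*} [NormedAddCommGroup V] [NormedSpace ℝ V] {Φ : V → ℝ}

lemma IsMinkowskiNorm.contDiffAt_sq (hΦ : IsMinkowskiNorm Φ) {u : V} (hu : u ≠ 0) :
    ContDiffAt ℝ (⊤ : ℕ∞) (fun w => (Φ w) ^ 2) u :=
  hΦ.smooth.contDiffAt (isOpen_compl_singleton.mem_nhds hu)

lemma IsMinkowskiNorm.diffAt_sq (hΦ : IsMinkowskiNorm Φ) {u : V} (hu : u ≠ 0) :
    DifferentiableAt ℝ (fun w => (Φ w) ^ 2) u :=
  (hΦ.contDiffAt_sq hu).differentiableAt (by simp)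

lemma legendre_apply_self (hΦ : IsMinkowskiNorm Φ) {u : V} (hu : u ≠ 0) :
    legendre Φ u u = (Φ u) ^ 2 := by
  have hq := hΦ.diffAt_sq hu
  have hline : HasDerivAt (fun s : ℝ => s • u) u 1 := by
    simpa using (hasDerivAt_id (1 : ℝ)).smul_const u
  have h1 : HasDerivAt (fun s : ℝ => (Φ (s • u)) ^ 2)
      (fderiv ℝ (fun w => (Φ w) ^ 2) u u) 1 := by
    have hq1 : HasFDerivAt (fun w => (Φ w) ^ 2)
        (fderiv ℝ (fun w => (Φ w) ^ 2) u) ((1 : ℝ) • u) := by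
      rw [one_smul]; exact hq.hasFDerivAt
    exact hq1.comp_hasDerivAt 1 hline
  have hev : (fun s : ℝ => s ^ 2 * (Φ u) ^ 2) =ᶠ[nhds (1 : ℝ)]
      (fun s : ℝ => (Φ (s • u)) ^ 2) := by
    filter_upwards [eventually_gt_nhds one_pos] with s hs
    rw [hΦ.smul, abs_of_pos hs]; ring
  have h2 : HasDerivAt (fun s : ℝ => s ^ 2 * (Φ u) ^ 2)
      (fderiv ℝ (fun w => (Φ w) ^ 2) u u) 1 := h1.congr_of_eventuallyEq hev
  have h3 : HasDerivAt (fun s : ℝ => s ^ 2 * (Φ u) ^ 2) (2 * (Φ u) ^ 2) 1 := by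
    simpa using (hasDerivAt_pow 2 (1 : ℝ)).mul_const ((Φ u) ^ 2)
  have := h2.unique h3
  simp only [legendre, ContinuousLinearMap.smul_apply, smul_eq_mul, this]
  ring

lemma legendre_apply_le (hΦ : IsMinkowskiNorm Φ) {u : V} (hu : u ≠ 0) (w : V) :
    legendre Φ u w ≤ Φ u * Φ w := by
  have hq := hΦ.diffAt_sq hu
  have hline : HasDerivAt (fun t : ℝ => u + t • w) w 0 := by
    simpa using ((hasDerivAt_id (0 : ℝ)).smul_const w).const_add u
  have h1 : HasDerivAt (fun t : ℝ => (Φ (u + t • w)) ^ 2)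
      (fderiv ℝ (fun v => (Φ v) ^ 2) u w) 0 := by
    have hq1 : HasFDerivAt (fun v => (Φ v) ^ 2)
        (fderiv ℝ (fun v => (Φ v) ^ 2) u) (u + (0 : ℝ) • w) := by
      rw [zero_smul, add_zero]; exact hq.hasFDerivAt
    exact hq1.comp_hasDerivAt 0 hline
  have hkey : fderiv ℝ (fun v => (Φ v) ^ 2) u w ≤ 2 * (Φ u * Φ w) := by
    have hslope : Filter.Tendsto (slope (fun t : ℝ => (Φ (u + t • w)) ^ 2) 0)
        (nhdsWithin 0 (Ioi 0)) (nhds (fderiv ℝ (fun v => (Φ v) ^ 2) u w)) :=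
      (hasDerivAt_iff_tendsto_slope.1 h1).mono_left
        (nhdsWithin_mono 0 (fun t ht => ne_of_gt ht))
    have hbound : Filter.Tendsto (fun t : ℝ => 2 * (Φ u * Φ w) + t * (Φ w) ^ 2)
        (nhdsWithin 0 (Ioi 0)) (nhds (2 * (Φ u * Φ w))) := by
      have : Filter.Tendsto (fun t : ℝ => 2 * (Φ u * Φ w) + t * (Φ w) ^ 2)
          (nhds 0) (nhds (2 * (Φ u * Φ w) + 0 * (Φ w) ^ 2)) :=
        (continuous_const.add (continuous_id.mul continuous_const)).tendsto 0
      simpa using this.mono_left nhdsWithin_le_nhds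
    refine le_of_tendsto_of_tendsto hslope hbound
      (Filter.eventually_of_mem self_mem_nhdsWithin fun t ht => ?_)
    have ht' : (0 : ℝ) < t := ht
    have htri : Φ (u + t • w) ≤ Φ u + t * Φ w := by
      have := hΦ.add_le u (t • w)
      rwa [hΦ.smul, abs_of_pos ht'] at this
    have hsq : (Φ (u + t • w)) ^ 2 ≤ (Φ u + t * Φ w) ^ 2 := by
      have h0 : 0 ≤ Φ (u + t • w) := hΦ.nonneg _
      nlinarith
    simp only [slope_def_field, zero_smul, add_zero, sub_zero]
    rw [div_le_iff₀ ht']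
    nlinarith [hΦ.nonneg u, hΦ.nonneg w]
  simp only [legendre, ContinuousLinearMap.smul_apply, smul_eq_mul]
  linarith

end aux

/-- **Lemma 2.3 (Burago–Ivanov).** Let `S : U → V` be a smooth immersion into a space
with a Minkowski norm `Φ`, `γ : I → U` a curve whose image `γ_S = S∘γ` is unit-speed, and
`h` a smooth function defined near `γ` with `h(γ(t)) = t`, whose level sets satisfy the
implicit relation `L_Φ(γ_S'(h(x)))(S(x) − γ_S(h(x))) = 0`. Then at every point
`x₀ = γ(t₀)` of the curve, `Dh(x₀) = L_Φ(γ_S'(t₀)) ∘ DS(x₀)`; consequently the induced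
dual norm of `Dh(x₀)` equals `1`. -/
theorem fderiv_of_implicit_calibrator
    {V : Type*} [NormedAddCommGroup V] [NormedSpace ℝ V] [FiniteDimensional ℝ V]
    (Φ : V → ℝ) (hΦ : IsMinkowskiNorm Φ)
    (U : Set E2) (hU : IsOpen U)
    (S : E2 → V) (hS : ContDiffOn ℝ (⊤ : ℕ∞) S U)
    (hSimm : ∀ x ∈ U, Function.Injective (fderiv ℝ S x))
    (I : Set ℝ) (hIopen : IsOpen I) (hIconn : I.OrdConnected)
    (γ : ℝ → E2) (hγsmooth : ContDiffOn ℝ (⊤ : ℕ∞) γ I) (hγU : MapsTo γ I U)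
    (hunit : ∀ t ∈ I, Φ (deriv (fun s => S (γ s)) t) = 1)
    (W : Set E2) (hW : IsOpen W) (hWU : W ⊆ U)
    (h : E2 → ℝ) (hh : ContDiffOn ℝ (⊤ : ℕ∞) h W) (hhI : MapsTo h W I)
    (hhγ : ∀ t ∈ I, γ t ∈ W → h (γ t) = t)
    (himpl : ∀ x ∈ W,
      legendre Φ (deriv (fun s => S (γ s)) (h x)) (S x - S (γ (h x))) = 0) :
    ∀ t₀ ∈ I, γ t₀ ∈ W →
      (∀ v : E2, fderiv ℝ h (γ t₀) v
          = legendre Φ (deriv (fun s => S (γ s)) t₀) (fderiv ℝ S (γ t₀) v)) ∧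
      sSup {r : ℝ | ∃ v : E2, Φ (fderiv ℝ S (γ t₀) v) = 1 ∧ fderiv ℝ h (γ t₀) v = r}
        = 1 := by
  intro t₀ ht₀ hx₀W
  set x₀ := γ t₀ with hx₀
  set γS : ℝ → V := fun s => S (γ s) with hγSdef
  have hx₀U : x₀ ∈ U := hWU hx₀W
  have ht0 : h x₀ = t₀ := hhγ t₀ ht₀ hx₀W
  have hSd : DifferentiableAt ℝ S x₀ :=
    (hS.contDiffAt (hU.mem_nhds hx₀U)).differentiableAt (by simp)
  have hγd : DifferentiableAt ℝ γ t₀ :=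
    (hγsmooth.contDiffAt (hIopen.mem_nhds ht₀)).differentiableAt (by simp)
  have hγScd : ContDiffOn ℝ (⊤ : ℕ∞) γS I := hS.comp hγsmooth hγU
  set c : V := deriv γS t₀ with hc
  have hΦc : Φ c = 1 := hunit t₀ ht₀
  have hc0 : c ≠ 0 := by
    intro h0
    rw [h0, (hΦ.eq_zero_iff 0).mpr rfl] at hΦc
    norm_num at hΦc
  have hγSc : HasDerivAt γS c t₀ :=
    ((hγScd.contDiffAt (hIopen.mem_nhds ht₀)).differentiableAt (by simp)).hasDerivAt
  have hγS_deriv : HasDerivAt γS (fderiv ℝ S x₀ (deriv γ t₀)) t₀ :=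
    hSd.hasFDerivAt.comp_hasDerivAt t₀ hγd.hasDerivAt
  have hcval : c = fderiv ℝ S x₀ (deriv γ t₀) := hγSc.unique hγS_deriv
  have hhd : DifferentiableAt ℝ h x₀ :=
    (hh.contDiffAt (hW.mem_nhds hx₀W)).differentiableAt (by simp)
  set Dh := fderiv ℝ h x₀ with hDh
  -- derivative of x ↦ γS (h x)
  have hcomp : HasFDerivAt (fun x => γS (h x))
      ((ContinuousLinearMap.smulRight (1 : ℝ →L[ℝ] ℝ) c).comp Dh) x₀ := by
    have h1 : HasFDerivAt γS (ContinuousLinearMap.smulRight (1 : ℝ →L[ℝ] ℝ) c) (h x₀) := by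
      rw [ht0]; exact hγSc.hasFDerivAt
    exact h1.comp x₀ hhd.hasFDerivAt
  have hCd : HasFDerivAt (fun x => S x - γS (h x))
      (fderiv ℝ S x₀ - (ContinuousLinearMap.smulRight (1 : ℝ →L[ℝ] ℝ) c).comp Dh) x₀ :=
    hSd.hasFDerivAt.sub hcomp
  -- differentiability of x ↦ legendre Φ (deriv γS (h x))
  have hgd : DifferentiableAt ℝ (fun x => deriv γS (h x)) x₀ := by
    have h1 : DifferentiableAt ℝ (deriv γS) (h x₀) := by
      rw [ht0]
      exact ((hγScd.deriv_of_isOpen (m := (⊤ : ℕ∞)) hIopen (by exact_mod_cast le_top)).contDiffAt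
        (hIopen.mem_nhds ht₀)).differentiableAt (by simp)
    exact h1.comp x₀ hhd
  have hLd : DifferentiableAt ℝ (legendre Φ) c := by
    have h2 : ContDiffAt ℝ (⊤ : ℕ∞) (fderiv ℝ fun w => (Φ w) ^ 2) c :=
      (hΦ.contDiffAt_sq hc0).fderiv_right (by exact_mod_cast le_top)
    exact (h2.differentiableAt (by simp)).const_smul (1 / 2 : ℝ)
  have hAd : DifferentiableAt ℝ (fun x => legendre Φ (deriv γS (h x))) x₀ := by
    have h1 : DifferentiableAt ℝ (legendre Φ) (deriv γS (h x₀)) := by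
      rw [ht0]; exact hLd
    exact DifferentiableAt.comp (g := legendre Φ) (f := fun x => deriv γS (h x)) x₀ h1 hgd
  -- the implicit function is zero near x₀
  have hF : HasFDerivAt (fun x => legendre Φ (deriv γS (h x)) (S x - γS (h x)))
      ((legendre Φ (deriv γS (h x₀))).comp
          (fderiv ℝ S x₀ - (ContinuousLinearMap.smulRight (1 : ℝ →L[ℝ] ℝ) c).comp Dh)
        + (fderiv ℝ (fun x => legendre Φ (deriv γS (h x))) x₀).flip (S x₀ - γS (h x₀))) x₀ :=
    hAd.hasFDerivAt.clm_apply hCd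
  have hF0 : HasFDerivAt (fun x => legendre Φ (deriv γS (h x)) (S x - γS (h x)))
      (0 : E2 →L[ℝ] ℝ) x₀ := by
    have hev : (fun x => legendre Φ (deriv γS (h x)) (S x - γS (h x)))
        =ᶠ[nhds x₀] fun _ => (0 : ℝ) :=
      Filter.eventuallyEq_of_mem (hW.mem_nhds hx₀W) fun x hx => himpl x hx
    exact (hasFDerivAt_const (0 : ℝ) x₀).congr_of_eventuallyEq hev
  have hDF := hF.unique hF0
  have hzero : S x₀ - γS (h x₀) = 0 := by rw [ht0]; simp [hγSdef, hx₀]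
  have key : ∀ v : E2, Dh v = legendre Φ c (fderiv ℝ S x₀ v) := by
    intro v
    have := congrArg (fun L : E2 →L[ℝ] ℝ => L v) hDF
    simp only [ContinuousLinearMap.add_apply, ContinuousLinearMap.coe_comp',
      Function.comp_apply, ContinuousLinearMap.sub_apply,
      ContinuousLinearMap.flip_apply, hzero, ContinuousLinearMap.map_zero,
      ContinuousLinearMap.zero_apply, add_zero, ht0,
      ContinuousLinearMap.smulRight_apply, ContinuousLinearMap.one_apply,
      map_sub] at this
    rw [map_smul] at this
    rw [legendre_apply_self hΦ hc0, hΦc] at this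
    simp only [smul_eq_mul, one_pow, mul_one] at this
    linarith
  constructor
  · intro v; rw [key v]
  · apply IsGreatest.csSup_eq
    constructor
    · refine ⟨deriv γ t₀, ?_, ?_⟩
      · rw [← hcval]; exact hΦc
      · rw [key, ← hcval, legendre_apply_self hΦ hc0, hΦc]; norm_num
    · rintro r ⟨v, hv1, hv2⟩
      rw [← hv2, key v]
      calc legendre Φ c (fderiv ℝ S x₀ v) ≤ Φ c * Φ (fderiv ℝ S x₀ v) :=
            legendre_apply_le hΦ hc0 _
        _ = 1 := by rw [hΦc, hv1, mul_one]

end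
end

section
/- Let V be a finite-dimensional real vector space with a Minkowski norm Φ, let I ⊆ ℝ be an open interval, and let β : I → V be a C^∞ curve with Φ(β'(t)) = 1 for all t ∈ I. Fix t₀ ∈ I. Then there exist δ > 0 with (t₀−δ, t₀+δ) ⊆ I, an open neighborhood W of β(t₀) in V, and a C^∞ function h : W → ℝ with values in (t₀−δ, t₀+δ) such that h(β(t)) = t for every t ∈ (t₀−δ, t₀+δ) with β(t) ∈ W, and for every x ∈ W the value h(x) is the unique t ∈ (t₀−δ, t₀+δ) satisfying L_Φ(β'(t))(x − β(t)) = 0. -/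
open Set

noncomputable section

/-- A continuous linear map `D : ℝ × V → ℝ` with `D (1,0) ≠ 0` gives rise to a continuous
linear equivalence `(s, w) ↦ (D (s, w), w)`. -/
theorem exists_equiv_prod {V : Type*} [NormedAddCommGroup V] [NormedSpace ℝ V]
    (D : ℝ × V →L[ℝ] ℝ) (hD : D (1, 0) ≠ 0) :
    ∃ E : (ℝ × V) ≃L[ℝ] (ℝ × V),
      (E : ℝ × V →L[ℝ] ℝ × V) = D.prod (ContinuousLinearMap.snd ℝ ℝ V) := by
  set a := D (1, 0) with ha
  set L : V →L[ℝ] ℝ := D.comp (ContinuousLinearMap.inr ℝ ℝ V) with hL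
  have hDsw : ∀ s : ℝ, ∀ w : V, D (s, w) = s * a + L w := by
    intro s w
    have h1 : (s, w) = s • ((1:ℝ), (0:V)) + ((0:ℝ), w) := by
      simp [Prod.ext_iff]
    rw [h1, map_add, map_smul]
    simp only [hL, ContinuousLinearMap.comp_apply, ContinuousLinearMap.inr_apply, smul_eq_mul, ha]
  refine ⟨ContinuousLinearEquiv.equivOfInverse (D.prod (ContinuousLinearMap.snd ℝ ℝ V))
    (((a⁻¹ : ℝ) • ((ContinuousLinearMap.fst ℝ ℝ V) - L.comp (ContinuousLinearMap.snd ℝ ℝ V))).prod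
      (ContinuousLinearMap.snd ℝ ℝ V)) ?_ ?_, rfl⟩
  · rintro ⟨s, w⟩
    simp only [ContinuousLinearMap.prod_apply, ContinuousLinearMap.coe_snd',
      ContinuousLinearMap.smul_apply, ContinuousLinearMap.sub_apply,
      ContinuousLinearMap.coe_fst', ContinuousLinearMap.comp_apply, hDsw, smul_eq_mul]
    refine Prod.ext ?_ rfl
    field_simp
    ring
  · rintro ⟨u, w⟩
    simp only [ContinuousLinearMap.prod_apply, ContinuousLinearMap.coe_snd',
      ContinuousLinearMap.smul_apply, ContinuousLinearMap.sub_apply,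
      ContinuousLinearMap.coe_fst', ContinuousLinearMap.comp_apply, hDsw, smul_eq_mul]
    refine Prod.ext ?_ rfl
    field_simp
    ring

/-- **Implicit definition of the calibrator.** Let `β : I → V` be a unit-speed `C^∞`
curve in a finite-dimensional space with a Minkowski norm `Φ`, and `t₀ ∈ I`. Then near
`β(t₀)` there is a `C^∞` function `h`, with `h(β(t)) = t`, such that `h(x)` is the
unique parameter `t` near `t₀` satisfying `L_Φ(β'(t))(x − β(t)) = 0`. -/
theorem implicit_calibrator_exists
    {V : Type*} [NormedAddCommGroup V] [NormedSpace ℝ V] [FiniteDimensional ℝ V]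
    (Φ : V → ℝ) (hΦ : IsMinkowskiNorm Φ)
    (I : Set ℝ) (hIopen : IsOpen I) (hIconn : I.OrdConnected)
    (β : ℝ → V) (hβ : ContDiffOn ℝ (⊤ : ℕ∞) β I)
    (hunit : ∀ t ∈ I, Φ (deriv β t) = 1)
    (t₀ : ℝ) (ht₀ : t₀ ∈ I) :
    ∃ δ : ℝ, 0 < δ ∧ Ioo (t₀ - δ) (t₀ + δ) ⊆ I ∧
      ∃ W : Set V, IsOpen W ∧ β t₀ ∈ W ∧
        ∃ h : V → ℝ, ContDiffOn ℝ (⊤ : ℕ∞) h W ∧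
          MapsTo h W (Ioo (t₀ - δ) (t₀ + δ)) ∧
          (∀ t ∈ Ioo (t₀ - δ) (t₀ + δ), β t ∈ W → h (β t) = t) ∧
          ∀ x ∈ W,
            legendre Φ (deriv β (h x)) (x - β (h x)) = 0 ∧
            ∀ t ∈ Ioo (t₀ - δ) (t₀ + δ),
              legendre Φ (deriv β t) (x - β t) = 0 → t = h x := by
  have hone : (1 : WithTop ℕ∞) ≤ ((⊤ : ℕ∞) : WithTop ℕ∞) := by
    exact_mod_cast (le_top : (1 : ℕ∞) ≤ ⊤)
  have hone0 : ((⊤ : ℕ∞) : WithTop ℕ∞) ≠ 0 := by simp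
  set f : V → ℝ := fun w => (Φ w) ^ 2 with hfdef
  set A : V → (V →L[ℝ] ℝ) := fderiv ℝ f with hAdef
  have hfs : ContDiffOn ℝ (⊤ : ℕ∞) f {(0 : V)}ᶜ := hΦ.smooth
  have hAs : ContDiffOn ℝ (⊤ : ℕ∞) A {(0 : V)}ᶜ :=
    hfs.fderiv_of_isOpen isOpen_compl_singleton le_rfl
  have hv : ContDiffOn ℝ (⊤ : ℕ∞) (deriv β) I := hβ.deriv_of_isOpen hIopen le_rfl
  have hvne : ∀ t ∈ I, deriv β t ≠ 0 := by
    intro t ht h0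
    have := hunit t ht
    rw [h0, (hΦ.eq_zero_iff 0).2 rfl] at this
    norm_num at this
  -- the implicit function
  set F : ℝ × V → ℝ := fun p => (1 / 2 : ℝ) * (A (deriv β p.1) (p.2 - β p.1)) with hFdef
  have hlegF : ∀ (t : ℝ) (x : V), legendre Φ (deriv β t) (x - β t) = F (t, x) := by
    intro t x
    simp [legendre, hFdef, hAdef, hfdef, smul_eq_mul]
  set U : Set (ℝ × V) := I ×ˢ (univ : Set V) with hUdef
  have hUopen : IsOpen U := hIopen.prod isOpen_univ
  have hFs : ContDiffOn ℝ (⊤ : ℕ∞) F U := by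
    have c1 : ContDiffOn ℝ (⊤ : ℕ∞) (fun p : ℝ × V => deriv β p.1) U :=
      hv.comp contDiff_fst.contDiffOn (fun p hp => hp.1)
    have c2 : ContDiffOn ℝ (⊤ : ℕ∞) (fun p : ℝ × V => A (deriv β p.1)) U :=
      hAs.comp c1 (fun p hp => hvne p.1 hp.1)
    have c3 : ContDiffOn ℝ (⊤ : ℕ∞) (fun p : ℝ × V => p.2 - β p.1) U :=
      contDiff_snd.contDiffOn.sub (hβ.comp contDiff_fst.contDiffOn (fun p hp => hp.1))
    exact (contDiffOn_const.mul (c2.clm_apply c3) : _)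
  have hdiff : ∀ q ∈ U, DifferentiableAt ℝ F q := by
    intro q hq
    exact (hFs.contDiffAt (hUopen.mem_nhds hq)).differentiableAt hone0
  -- partial derivative in the `t` direction
  have hpart : ∀ q ∈ U, HasDerivAt (fun t => F (t, q.2))
      (fderiv ℝ F q ((1 : ℝ), (0 : V))) q.1 := by
    rintro ⟨t, x⟩ hq
    have hline : HasDerivAt (fun s : ℝ => (s, x)) (((1 : ℝ), (0 : V))) t :=
      (hasDerivAt_id t).prodMk (hasDerivAt_const t x)
    exact ((hdiff (t, x) hq).hasFDerivAt).comp_hasDerivAt t hline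
  -- Euler identity
  have hEuler : ∀ w : V, w ≠ 0 → A w w = 2 * (Φ w) ^ 2 := by
    intro w hw
    have hdw : DifferentiableAt ℝ f w :=
      (hfs.contDiffAt (isOpen_compl_singleton.mem_nhds hw)).differentiableAt hone0
    have hsm : HasDerivAt (fun c : ℝ => c • w) w 1 := by
      simpa using (hasDerivAt_id (1 : ℝ)).smul_const w
    have h1 : HasDerivAt (fun c : ℝ => f (c • w)) (A w w) 1 := by
      have hfd : HasFDerivAt f (A w) ((1 : ℝ) • w) := by
        rw [one_smul]; exact hdw.hasFDerivAt
      exact hfd.comp_hasDerivAt 1 hsm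
    have h2 : (fun c : ℝ => f (c • w)) = fun c : ℝ => c ^ 2 * (Φ w) ^ 2 := by
      funext c
      simp only [hfdef, hΦ.smul c w, mul_pow, sq_abs]
    have h3 : HasDerivAt (fun c : ℝ => c ^ 2 * (Φ w) ^ 2) (2 * (Φ w) ^ 2) 1 := by
      simpa using (hasDerivAt_pow 2 (1 : ℝ)).mul_const ((Φ w) ^ 2)
    rw [h2] at h1
    exact h1.unique h3
  set q₀ : ℝ × V := (t₀, β t₀) with hq₀def
  have hq₀U : q₀ ∈ U := ⟨ht₀, mem_univ _⟩
  -- derivative of F in the t-direction at q₀ is -1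
  have hkey : fderiv ℝ F q₀ ((1 : ℝ), (0 : V)) = -1 := by
    have hvt : DifferentiableAt ℝ (fun t => A (deriv β t)) t₀ := by
      have : ContDiffAt ℝ (⊤ : ℕ∞) (fun t => A (deriv β t)) t₀ := by
        refine ContDiffAt.comp t₀ (hAs.contDiffAt ?_) (hv.contDiffAt (hIopen.mem_nhds ht₀))
        exact isOpen_compl_singleton.mem_nhds (hvne t₀ ht₀)
      exact this.differentiableAt hone0
    have hβd : HasDerivAt β (deriv β t₀) t₀ :=
      ((hβ.contDiffAt (hIopen.mem_nhds ht₀)).differentiableAt hone0).hasDerivAt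
    have hu : HasDerivAt (fun t => β t₀ - β t) (-(deriv β t₀)) t₀ := by
      simpa [Pi.sub_def] using (hasDerivAt_const t₀ (β t₀)).sub hβd
    have hc := hvt.hasDerivAt
    have hg : HasDerivAt (fun t => F (t, β t₀)) (-1) t₀ := by
      have happ := hc.clm_apply hu
      have happ' : HasDerivAt (fun t => A (deriv β t) (β t₀ - β t))
          (-(A (deriv β t₀) (deriv β t₀))) t₀ := by
        refine happ.congr_deriv ?_
        simp
      have := happ'.const_mul (1 / 2 : ℝ)
      refine this.congr_deriv ?_
      rw [hEuler (deriv β t₀) (hvne t₀ ht₀), hunit t₀ ht₀]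
      norm_num
    exact (hpart q₀ hq₀U).unique hg
  -- the open region where the partial derivative is negative
  set P : ℝ × V → ℝ := fun q => fderiv ℝ F q ((1 : ℝ), (0 : V)) with hPdef
  have hPcont : ContinuousOn P U := by
    have := hFs.continuousOn_fderiv_of_isOpen hUopen hone
    exact this.clm_apply continuousOn_const
  set Ω : Set (ℝ × V) := U ∩ P ⁻¹' (Iio 0) with hΩdef
  have hΩopen : IsOpen Ω := hPcont.isOpen_inter_preimage hUopen isOpen_Iio
  have hq₀Ω : q₀ ∈ Ω := ⟨hq₀U, by simp [hPdef, hkey]⟩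
  obtain ⟨ε, hεpos, hball⟩ : ∃ ε > 0, Metric.ball q₀ ε ⊆ Ω :=
    Metric.isOpen_iff.1 hΩopen q₀ hq₀Ω
  have hprodball : Ioo (t₀ - ε) (t₀ + ε) ×ˢ Metric.ball (β t₀) ε ⊆ Ω := by
    rw [← Real.ball_eq_Ioo]
    rw [ball_prod_same]
    exact hball
  -- strict antitonicity in t for fixed x near β t₀
  have hanti : ∀ x ∈ Metric.ball (β t₀) ε,
      StrictAntiOn (fun t => F (t, x)) (Ioo (t₀ - ε) (t₀ + ε)) := by
    intro x hx
    have hmem : ∀ t ∈ Ioo (t₀ - ε) (t₀ + ε), (t, x) ∈ Ω := fun t ht =>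
      hprodball ⟨ht, hx⟩
    refine strictAntiOn_of_deriv_neg (convex_Ioo _ _) ?_ ?_
    · intro t ht
      exact ((hpart (t, x) (hmem t ht).1).continuousAt).continuousWithinAt
    · intro t ht
      rw [isOpen_Ioo.interior_eq] at ht
      rw [(hpart (t, x) (hmem t ht).1).deriv]
      exact (hmem t ht).2
  -- the inverse function theorem setup
  set G : ℝ × V → ℝ × V := fun q => (F q, q.2) with hGdef
  have hGat : ∀ q ∈ U, ContDiffAt ℝ (⊤ : ℕ∞) G q := by
    intro q hq
    exact (hFs.contDiffAt (hUopen.mem_nhds hq)).prodMk contDiffAt_snd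
  have hGprime : ∀ q ∈ U, HasFDerivAt G
      ((fderiv ℝ F q).prod (ContinuousLinearMap.snd ℝ ℝ V)) q := by
    intro q hq
    exact ((hdiff q hq).hasFDerivAt).prodMk hasFDerivAt_snd
  obtain ⟨E₀, hE₀⟩ : ∃ E : (ℝ × V) ≃L[ℝ] (ℝ × V),
      (E : ℝ × V →L[ℝ] ℝ × V) = (fderiv ℝ F q₀).prod (ContinuousLinearMap.snd ℝ ℝ V) := by
    apply exists_equiv_prod
    rw [hkey]; norm_num
  have hG'₀ : HasFDerivAt G (E₀ : ℝ × V →L[ℝ] ℝ × V) q₀ := by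
    rw [hE₀]; exact hGprime q₀ hq₀U
  set Ph := (hGat q₀ hq₀U).toOpenPartialHomeomorph G hG'₀ hone0 with hPhdef
  have hPhcoe : ⇑Ph = G := ContDiffAt.toOpenPartialHomeomorph_coe _ _ _
  have hq₀source : q₀ ∈ Ph.source :=
    ContDiffAt.mem_toOpenPartialHomeomorph_source _ _ _
  have hGq₀ : G q₀ = ((0 : ℝ), β t₀) := by
    simp [hGdef, hFdef, hq₀def]
  have htarget : ((0 : ℝ), β t₀) ∈ Ph.target := by
    rw [← hGq₀]
    exact ContDiffAt.image_mem_toOpenPartialHomeomorph_target _ _ _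
  have hsymmq₀ : Ph.symm ((0 : ℝ), β t₀) = q₀ := by
    rw [← hGq₀, ← hPhcoe]
    exact Ph.left_inv hq₀source
  -- the set where the local inverse is well-behaved
  set T : Set (ℝ × V) :=
    Ph.target ∩ Ph.symm ⁻¹' (Ph.source ∩ (Ω ∩ Ioo (t₀ - ε) (t₀ + ε) ×ˢ Metric.ball (β t₀) ε))
    with hTdef
  have hTopen : IsOpen T := by
    apply Ph.symm.continuousOn.isOpen_inter_preimage Ph.open_target
    exact Ph.open_source.inter (hΩopen.inter ((isOpen_Ioo).prod Metric.isOpen_ball))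
  have hT0 : ((0 : ℝ), β t₀) ∈ T := by
    refine ⟨htarget, ?_⟩
    rw [mem_preimage, hsymmq₀]
    refine ⟨hq₀source, hq₀Ω, ?_, ?_⟩
    · simp only [hq₀def]; constructor <;> simp <;> linarith
    · simp [hq₀def, hεpos]
  have hTsub : T ⊆ Ph.target := inter_subset_left
  -- the local inverse is smooth on T
  have hsymm_smooth : ContDiffOn ℝ (⊤ : ℕ∞) Ph.symm T := by
    intro y hy
    have hymem := hy.2
    rw [mem_preimage] at hymem
    set q := Ph.symm y with hqdef
    have hqU : q ∈ U := hymem.2.1.1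
    have hPq : P q < 0 := hymem.2.1.2
    obtain ⟨Eq, hEq⟩ : ∃ E : (ℝ × V) ≃L[ℝ] (ℝ × V),
        (E : ℝ × V →L[ℝ] ℝ × V) = (fderiv ℝ F q).prod (ContinuousLinearMap.snd ℝ ℝ V) :=
      exists_equiv_prod _ (ne_of_lt hPq)
    have hG'q : HasFDerivAt (⇑Ph) (Eq : ℝ × V →L[ℝ] ℝ × V) q := by
      rw [hPhcoe, hEq]; exact hGprime q hqU
    have hGatq : ContDiffAt ℝ (⊤ : ℕ∞) (⇑Ph) q := by
      rw [hPhcoe]; exact hGat q hqU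
    exact (Ph.contDiffAt_symm hy.1 hG'q hGatq).contDiffWithinAt
  -- the neighborhood W and the function h
  have hι : Continuous (fun x : V => ((0 : ℝ), x)) := continuous_const.prodMk continuous_id
  set W : Set V := (fun x : V => ((0 : ℝ), x)) ⁻¹' T with hWdef
  have hWopen : IsOpen W := hTopen.preimage hι
  have hβt₀W : β t₀ ∈ W := hT0
  set h : V → ℝ := fun x => (Ph.symm ((0 : ℝ), x)).1 with hhdef
  -- basic properties for x ∈ W
  have hmain : ∀ x ∈ W, Ph.symm ((0 : ℝ), x) = (h x, x) ∧ F (h x, x) = 0 ∧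
      h x ∈ Ioo (t₀ - ε) (t₀ + ε) := by
    intro x hx
    have hxT : ((0 : ℝ), x) ∈ T := hx
    have hGsymm : G (Ph.symm ((0 : ℝ), x)) = ((0 : ℝ), x) := by
      rw [← hPhcoe]
      exact Ph.right_inv (hTsub hxT)
    have h2 : (Ph.symm ((0 : ℝ), x)).2 = x := by
      have := congrArg Prod.snd hGsymm
      simpa [hGdef] using this
    have heq : Ph.symm ((0 : ℝ), x) = (h x, x) := by
      rw [hhdef]
      exact Prod.ext rfl h2
    have hF0 : F (h x, x) = 0 := by
      have := congrArg Prod.fst hGsymm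
      rw [heq] at this
      simpa [hGdef] using this
    have hIoo : h x ∈ Ioo (t₀ - ε) (t₀ + ε) := by
      have hmem := hxT.2
      rw [mem_preimage, heq] at hmem
      exact hmem.2.2.1
    exact ⟨heq, hF0, hIoo⟩
  have hWball : W ⊆ Metric.ball (β t₀) ε := by
    intro x hx
    have hxT : ((0 : ℝ), x) ∈ T := hx
    have hmem := hxT.2
    rw [mem_preimage, (hmain x hx).1] at hmem
    exact (mem_prod.1 hmem.2.2).2
  refine ⟨ε, hεpos, ?_, W, hWopen, hβt₀W, h, ?_, ?_, ?_, ?_⟩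
  · -- Ioo ⊆ I
    intro t ht
    have : (t, β t₀) ∈ Ω := hprodball ⟨ht, Metric.mem_ball_self hεpos⟩
    exact this.1.1
  · -- smoothness of h
    have hιs : ContDiff ℝ (⊤ : ℕ∞) (fun x : V => ((0 : ℝ), x)) :=
      contDiff_const.prodMk contDiff_id
    have hcomp : ContDiffOn ℝ (⊤ : ℕ∞) (fun x => Ph.symm ((0 : ℝ), x)) W :=
      hsymm_smooth.comp hιs.contDiffOn (fun x hx => hx)
    exact contDiff_fst.comp_contDiffOn hcomp
  · -- MapsTo
    intro x hx
    exact (hmain x hx).2.2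
  · -- h (β t) = t
    intro t ht hβtW
    have hFt : F (t, β t) = 0 := by
      simp [hFdef]
    have hinj := (hanti (β t) (hWball hβtW)).injOn
    have hhx := hmain (β t) hβtW
    refine hinj hhx.2.2 ht ?_
    show F (h (β t), β t) = F (t, β t)
    rw [hhx.2.1, hFt]
  · -- the implicit equation and uniqueness
    intro x hx
    have hhx := hmain x hx
    constructor
    · rw [hlegF, hhx.2.1]
    · intro t ht hleg
      rw [hlegF] at hleg
      have hinj := (hanti x (hWball hx)).injOn
      refine hinj ht hhx.2.2 ?_
      show F (t, x) = F (h x, x)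
      rw [hleg, hhx.2.1]

end
end

section
/- Let V be a real normed space and let v ∈ V with ‖v‖ = 1 be a point at which the norm function is differentiable, with derivative D‖·‖(v) ∈ V*. If L ∈ V* satisfies ‖L‖* ≤ 1 and L(v) = 1, then L = D‖·‖(v). In other words, at a point of differentiability of the norm on the unit sphere, the derivative of the norm is the unique supporting functional: the unique L ∈ V* with dual norm 1 attaining the value 1 at v. -/
/-- At a point of differentiability of the norm on the unit sphere of a real normed
space, the derivative of the norm is the unique supporting functional: if `‖v‖ = 1`,
the norm is differentiable at `v`, and `L` is a continuous linear functional with dual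
norm `‖L‖ ≤ 1` and `L v = 1`, then `L` equals the derivative of the norm at `v`. -/
theorem supporting_functional_unique {V : Type*} [NormedAddCommGroup V] [NormedSpace ℝ V]
    (v : V) (hv : ‖v‖ = 1) (hd : DifferentiableAt ℝ (fun x : V => ‖x‖) v)
    (L : V →L[ℝ] ℝ) (hL : ‖L‖ ≤ 1) (hLv : L v = 1) :
    L = fderiv ℝ (fun x : V => ‖x‖) v := by
  set f := fderiv ℝ (fun x : V => ‖x‖) v with hf
  ext w
  -- auxiliary function
  set φ : ℝ → ℝ := fun t => ‖v + t • w‖ - 1 - t * L w with hφ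
  have hline : HasDerivAt (fun t : ℝ => v + t • w) w 0 := by
    simpa using ((hasDerivAt_id (0 : ℝ)).smul_const w).const_add v
  have hφ' : HasDerivAt φ (f w - L w) 0 := by
    have h1 : HasDerivAt (fun t : ℝ => ‖v + t • w‖) (f w) 0 := by
      have hd' : HasFDerivAt (fun x : V => ‖x‖) f (v + (0 : ℝ) • w) := by
        simpa using hd.hasFDerivAt
      exact hd'.comp_hasDerivAt 0 hline
    have h2 : HasDerivAt (fun t : ℝ => t * L w) (L w) 0 := by
      simpa using (hasDerivAt_id (0 : ℝ)).mul_const (L w)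
    exact (h1.sub_const 1).sub h2
  have hnonneg : ∀ t : ℝ, 0 ≤ φ t := by
    intro t
    have hLx : L (v + t • w) ≤ ‖v + t • w‖ := by
      calc L (v + t • w) ≤ ‖L (v + t • w)‖ := le_abs_self _
        _ ≤ ‖L‖ * ‖v + t • w‖ := L.le_opNorm _
        _ ≤ 1 * ‖v + t • w‖ := by
            exact mul_le_mul_of_nonneg_right hL (norm_nonneg _)
        _ = ‖v + t • w‖ := one_mul _
    have : L (v + t • w) = 1 + t * L w := by simp [hLv, mul_comm]
    simp only [hφ]
    linarith [hLx, this ▸ hLx]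
  have hφ0 : φ 0 = 0 := by simp [hφ, hv]
  have hmin : IsLocalMin φ 0 :=
    Filter.Eventually.of_forall fun t => hφ0.trans_le (hnonneg t)
  have := hmin.hasDerivAt_eq_zero hφ'
  linarith
end
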